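/- With the notation above (each φ_i invertible), the elements h_i := 1 + ŷⁱ x_i and 1 + yⁱ x̂_i of End(W_i) are equal, and each h_i is invertible. -/

import Mathlib

private lemma aux_unit {V W : Type} [AddCommGroup V] [Module ℂ V]
    [AddCommGroup W] [Module ℂ W] (a : V →ₗ[ℂ] W) (b : W →ₗ[ℂ] V)
    (h : IsUnit ((1 : Module.End ℂ V) + b ∘ₗ a)) :
    IsUnit ((1 : Module.End ℂ W) + a ∘ₗ b) := by
  obtain ⟨u, hu⟩ := h
  set c : Module.End ℂ V := ↑u⁻¹ with hc
  have huc : (↑u : Module.End ℂ V) ∘ₗ c = 1 := u.mul_inv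
  have hcu : c ∘ₗ (↑u : Module.End ℂ V) = 1 := u.inv_mul
  have hba : b ∘ₗ a = (↑u : Module.End ℂ V) - 1 := by rw [hu]; abel
  rw [isUnit_iff_exists]
  refine ⟨(1 : Module.End ℂ W) - a ∘ₗ c ∘ₗ b, ?_, ?_⟩
  · show ((1 : Module.End ℂ W) + a ∘ₗ b) ∘ₗ ((1 : Module.End ℂ W) - a ∘ₗ c ∘ₗ b) = 1
    have key : (b ∘ₗ a) ∘ₗ c = 1 - c := by
      rw [hba, LinearMap.sub_comp, huc, Module.End.one_eq_id, LinearMap.id_comp]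
    calc ((1 : Module.End ℂ W) + a ∘ₗ b) ∘ₗ ((1 : Module.End ℂ W) - a ∘ₗ c ∘ₗ b)
        = 1 - a ∘ₗ c ∘ₗ b + a ∘ₗ b - a ∘ₗ ((b ∘ₗ a) ∘ₗ c) ∘ₗ b := by
          simp only [LinearMap.add_comp, LinearMap.comp_sub, LinearMap.comp_add,
            Module.End.one_eq_id, LinearMap.id_comp, LinearMap.comp_id,
            LinearMap.comp_assoc]
          abel
      _ = 1 := by
          rw [key]
          simp only [LinearMap.comp_sub, LinearMap.sub_comp, Module.End.one_eq_id,
            LinearMap.id_comp, LinearMap.comp_id]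
          abel
  · show ((1 : Module.End ℂ W) - a ∘ₗ c ∘ₗ b) ∘ₗ ((1 : Module.End ℂ W) + a ∘ₗ b) = 1
    have key : c ∘ₗ (b ∘ₗ a) = 1 - c := by
      rw [hba, LinearMap.comp_sub, hcu, Module.End.one_eq_id, LinearMap.comp_id]
    calc ((1 : Module.End ℂ W) - a ∘ₗ c ∘ₗ b) ∘ₗ ((1 : Module.End ℂ W) + a ∘ₗ b)
        = 1 + a ∘ₗ b - a ∘ₗ c ∘ₗ b - a ∘ₗ (c ∘ₗ (b ∘ₗ a)) ∘ₗ b := by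
          simp only [LinearMap.add_comp, LinearMap.sub_comp, LinearMap.comp_sub,
            LinearMap.comp_add, Module.End.one_eq_id, LinearMap.id_comp,
            LinearMap.comp_id, LinearMap.comp_assoc]
          abel
      _ = 1 := by
          rw [key]
          simp only [LinearMap.comp_sub, LinearMap.sub_comp, Module.End.one_eq_id,
            LinearMap.id_comp, LinearMap.comp_id]
          abel

/-- With the notation above (each `φ_i` invertible), the elements
`h_i = 1 + ŷⁱ x_i` and `1 + yⁱ x̂_i` of `End(W_i)` are equal, and each `h_i` is
invertible. -/
theorem stmt_4 (V : Type) [AddCommGroup V] [Module ℂ V] [FiniteDimensional ℂ V]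
    (W : ℕ → Type) [∀ i, AddCommGroup (W i)] [∀ i, Module ℂ (W i)]
    [∀ i, FiniteDimensional ℂ (W i)]
    (x : ∀ i, W i →ₗ[ℂ] V) (y : ∀ i, V →ₗ[ℂ] W i)
    (φ : ℕ → Module.End ℂ V)
    (hφdef : ∀ n, φ n = 1 + ∑ j ∈ Finset.range n, (x j) ∘ₗ (y j))
    (hφ : ∀ n, IsUnit (φ n)) :
    ∀ i, ((1 : Module.End ℂ (W i)) + ((y i) ∘ₗ (Ring.inverse (φ i))) ∘ₗ (x i)
            = (1 : Module.End ℂ (W i)) + (y i) ∘ₗ ((Ring.inverse (φ i)) ∘ₗ (x i)))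
        ∧ IsUnit ((1 : Module.End ℂ (W i)) + ((y i) ∘ₗ (Ring.inverse (φ i))) ∘ₗ (x i)) := by
  intro i
  refine ⟨by rw [LinearMap.comp_assoc], ?_⟩
  rw [LinearMap.comp_assoc]
  apply aux_unit
  have hsucc : φ (i + 1) = φ i + x i ∘ₗ y i := by
    rw [hφdef (i + 1), hφdef i, Finset.sum_range_succ]; abel
  have key : (1 : Module.End ℂ V) + (Ring.inverse (φ i) ∘ₗ x i) ∘ₗ y i
      = Ring.inverse (φ i) * φ (i + 1) := by
    rw [hsucc, mul_add, Ring.inverse_mul_cancel _ (hφ i), Module.End.mul_eq_comp,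
      LinearMap.comp_assoc]
  rw [key]
  exact (isUnit_ringInverse.mpr (hφ i)).mul (hφ (i + 1))
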